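/- Let v : [0,1] → ℝ be continuous on [0,1], continuously differentiable on [0,1) with v'(0) = 0, and satisfy (τ v'(τ))' = -Ha²·τ·(1 - v(τ)/(1 - α v(τ))) on (0,1), v(1) = 0. Assume α > 0, Ha² > 0, and 0 ≤ v(τ) < 1/(1 + α) on (0,1). Then v(τ) > 0 for all τ ∈ [0,1). -/
import Mathlib


theorem stmt_7 (α Ha : ℝ) (v v' : ℝ → ℝ)
    (hα : 0 < α) (hHa : 0 < Ha ^ 2)
    (hc : ContinuousOn v (Set.Icc 0 1))
    (hd : ∀ τ ∈ Set.Ico (0 : ℝ) 1, HasDerivAt v (v' τ) τ)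
    (hv'c : ContinuousOn v' (Set.Ico 0 1))
    (hbc0 : v' 0 = 0) (hbc1 : v 1 = 0)
    (heq : ∀ τ ∈ Set.Ioo (0 : ℝ) 1,
      HasDerivAt (fun s => s * v' s) (-Ha ^ 2 * τ * (1 - v τ / (1 - α * v τ))) τ)
    (hbnd : ∀ τ ∈ Set.Ioo (0 : ℝ) 1, 0 ≤ v τ ∧ v τ < 1 / (1 + α)) :
    ∀ τ ∈ Set.Ico (0 : ℝ) 1, 0 < v τ := by
  have h1α : (0:ℝ) < 1 + α := by linarith
  set g : ℝ → ℝ := fun s => s * v' s with hg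
  have hganti : StrictAntiOn g (Set.Ico 0 1) := by
    apply strictAntiOn_of_deriv_neg (convex_Ico 0 1)
    · exact continuousOn_id.mul hv'c
    · intro τ hτ
      rw [interior_Ico] at hτ
      obtain ⟨h0, h1⟩ := hτ
      rw [HasDerivAt.deriv (heq τ ⟨h0, h1⟩)]
      obtain ⟨hv0, hv1⟩ := hbnd τ ⟨h0, h1⟩
      have h3 : 0 < 1 - α * v τ := by
        have hlt : α * v τ < α * (1 / (1 + α)) :=
          mul_lt_mul_of_pos_left hv1 hα
        have : α * (1 / (1 + α)) < 1 := by
          rw [mul_one_div, div_lt_one h1α]; linarith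
        linarith
      have h5 : v τ * (1 + α) < 1 := (lt_div_iff₀ h1α).mp hv1
      have h4 : v τ / (1 - α * v τ) < 1 := by
        rw [div_lt_one h3]; nlinarith
      have h6 : 0 < 1 - v τ / (1 - α * v τ) := by linarith
      nlinarith [mul_pos (mul_pos hHa h0) h6]
  have hg0 : g 0 = 0 := by simp [hg, hbc0]
  have hv'neg : ∀ τ ∈ Set.Ioo (0:ℝ) 1, v' τ < 0 := by
    rintro τ ⟨h0, h1⟩
    have h := hganti (Set.left_mem_Ico.mpr one_pos) ⟨le_of_lt h0, h1⟩ h0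
    rw [hg0] at h
    have h' : τ * v' τ < 0 := h
    nlinarith
  have hvanti : StrictAntiOn v (Set.Icc 0 1) := by
    apply strictAntiOn_of_deriv_neg (convex_Icc 0 1) hc
    intro τ hτ
    rw [interior_Icc] at hτ
    rw [HasDerivAt.deriv (hd τ ⟨le_of_lt hτ.1, hτ.2⟩)]
    exact hv'neg τ hτ
  rintro τ ⟨h0, h1⟩
  have h := hvanti ⟨h0, le_of_lt h1⟩ (Set.right_mem_Icc.mpr zero_le_one) h1
  rwa [hbc1] at h
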